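/- Let k ∈ ℕ, let p ≥ 0 be a real number, and let F : Γ → ℂ satisfy ∑_{σ ∈ Γ} λ_σ^{-2p} |F(σ)|² < ∞. Then ∑_{σ ∈ Γ} λ_σ^{-2p} |(𝔞_k F)(σ)|² converges and ‖𝔞_k F‖_{-p} ≤ (1+k)^p · ‖F‖_{-p}; that is, S_p* is invariant under the annihilation operator 𝔞_k, which is bounded on it with norm at most (1+k)^p. -/

import Mathlib

open scoped BigOperators

/-- `λ_σ = ∏_{k ∈ σ} (k+1)`, with `λ_∅ = 1`. -/
noncomputable def lam (σ : Finset ℕ) : ℝ := ∏ k ∈ σ, ((k : ℝ) + 1)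

/-- The annihilation operator: `(𝔞_k F)(σ) = F(σ ∪ {k})` if `k ∉ σ`, else `0`. -/
def ann (k : ℕ) (F : Finset ℕ → ℂ) : Finset ℕ → ℂ :=
  fun σ => if k ∈ σ then 0 else F (insert k σ)

set_option maxHeartbeats 1000000 in
/-- `S_p*` is invariant under `𝔞_k`, with `‖𝔞_k F‖_{-p} ≤ (1+k)^p ‖F‖_{-p}`. -/
theorem stmt3 (k : ℕ) (p : ℝ) (hp : 0 ≤ p) (F : Finset ℕ → ℂ)
    (hF : Summable (fun σ : Finset ℕ => lam σ ^ (-(2 * p)) * ‖F σ‖ ^ 2)) :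
    Summable (fun σ : Finset ℕ => lam σ ^ (-(2 * p)) * ‖ann k F σ‖ ^ 2) ∧
    Real.sqrt (∑' σ : Finset ℕ, lam σ ^ (-(2 * p)) * ‖ann k F σ‖ ^ 2)
      ≤ (1 + (k : ℝ)) ^ p *
        Real.sqrt (∑' σ : Finset ℕ, lam σ ^ (-(2 * p)) * ‖F σ‖ ^ 2) := by
  set f : Finset ℕ → ℝ := fun σ => lam σ ^ (-(2 * p)) * ‖F σ‖ ^ 2 with hfdef
  set g : Finset ℕ → ℝ := fun σ => lam σ ^ (-(2 * p)) * ‖ann k F σ‖ ^ 2 with hgdef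
  have hk1 : (0:ℝ) < 1 + (k:ℝ) := by positivity
  have hlam : ∀ σ : Finset ℕ, 0 < lam σ := fun σ =>
    Finset.prod_pos (fun i _ => by positivity)
  have hfnn : ∀ σ, 0 ≤ f σ := fun σ => by
    have := hlam σ; positivity
  have hgnn : ∀ σ, 0 ≤ g σ := fun σ => by
    have := hlam σ; positivity
  set c : ℝ := (1 + (k:ℝ)) ^ (2 * p) with hcdef
  have hcnn : 0 ≤ c := Real.rpow_nonneg hk1.le _
  -- key identity
  have key : ∀ σ : Finset ℕ, k ∉ σ → g σ = c * f (insert k σ) := by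
    intro σ hσ
    have hins : lam (insert k σ) = (1 + (k:ℝ)) * lam σ := by
      rw [lam, Finset.prod_insert hσ, add_comm]; rfl
    have h1 : lam (insert k σ) ^ (-(2*p)) = (1 + (k:ℝ)) ^ (-(2*p)) * lam σ ^ (-(2*p)) := by
      rw [hins, Real.mul_rpow hk1.le (hlam σ).le]
    have h2 : c * (1 + (k:ℝ)) ^ (-(2*p)) = 1 := by
      rw [hcdef, ← Real.rpow_add hk1]
      simp
    simp only [hgdef, hfdef, ann, if_neg hσ, h1]
    rw [← mul_assoc, ← mul_assoc, h2, one_mul]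
  have hzero : ∀ σ : Finset ℕ, k ∈ σ → g σ = 0 := by
    intro σ hσ
    simp [hgdef, ann, if_pos hσ]
  -- injection
  set S : Set (Finset ℕ) := {σ | k ∉ σ} with hSdef
  have hinj : Function.Injective (fun σ : S => insert k σ.1) := by
    rintro ⟨a, ha⟩ ⟨b, hb⟩ h
    have h' : insert k a = insert k b := h
    simp only [Subtype.mk.injEq]
    have h2 : (insert k a).erase k = (insert k b).erase k := by rw [h']
    rwa [Finset.erase_insert ha, Finset.erase_insert hb] at h2
  have hsubS : Summable (fun σ : S => f (insert k σ.1)) := hF.comp_injective hinj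
  have hgS : Summable (fun σ : S => g σ.1) := by
    refine (hsubS.mul_left c).congr ?_
    intro σ; exact (key σ.1 σ.2).symm
  have hgSc : Summable (fun σ : ↥Sᶜ => g σ.1) := by
    refine summable_zero.congr ?_
    intro σ
    have hm := σ.2
    simp only [hSdef, Set.mem_compl_iff, Set.mem_setOf_eq, not_not] at hm
    exact (hzero σ.1 hm).symm
  have hgsum : Summable g := (summable_subtype_and_compl.mp ⟨hgS, hgSc⟩ : _)
  refine ⟨hgsum, ?_⟩
  -- tsum bound
  have htsum : ∑' σ, g σ ≤ c * ∑' σ, f σ := by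
    have h1 : ∑' σ : S, g σ.1 + ∑' σ : ↥Sᶜ, g σ.1 = ∑' σ, g σ :=
      hgsum.tsum_subtype_add_tsum_subtype_compl S
    have h2 : ∑' σ : ↥Sᶜ, g σ.1 = 0 := by
      have hz : ∀ σ : ↥Sᶜ, g σ.1 = 0 := by
        intro σ
        have hm := σ.2
        simp only [hSdef, Set.mem_compl_iff, Set.mem_setOf_eq, not_not] at hm
        exact hzero σ.1 hm
      calc ∑' σ : ↥Sᶜ, g σ.1 = ∑' _σ : ↥Sᶜ, (0:ℝ) := tsum_congr hz
        _ = 0 := tsum_zero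
    have h3 : ∑' σ : S, g σ.1 = c * ∑' σ : S, f (insert k σ.1) := by
      rw [← tsum_mul_left]
      exact tsum_congr fun σ => key σ.1 σ.2
    have h4 : ∑' σ : S, f (insert k σ.1) ≤ ∑' σ, f σ :=
      hsubS.tsum_le_tsum_of_inj _ hinj (fun τ _ => hfnn τ) (fun σ => le_refl _) hF
    calc ∑' σ, g σ = ∑' σ : S, g σ.1 := by rw [← h1, h2, add_zero]
      _ = c * ∑' σ : S, f (insert k σ.1) := h3
      _ ≤ c * ∑' σ, f σ := by exact mul_le_mul_of_nonneg_left h4 hcnn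
  have hsq : Real.sqrt (c * ∑' σ, f σ) = (1 + (k:ℝ)) ^ p * Real.sqrt (∑' σ, f σ) := by
    have hc2 : c = ((1 + (k:ℝ)) ^ p) ^ 2 := by
      rw [hcdef, ← Real.rpow_natCast ((1 + (k:ℝ)) ^ p) 2, ← Real.rpow_mul hk1.le]
      norm_num
      ring_nf
    rw [hc2, Real.sqrt_mul (sq_nonneg _), Real.sqrt_sq (Real.rpow_nonneg hk1.le _)]
  calc Real.sqrt (∑' σ, g σ) ≤ Real.sqrt (c * ∑' σ, f σ) := Real.sqrt_le_sqrt htsum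
    _ = _ := hsq
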